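/- Let ψ₀ be a SIC fiducial vector in odd dimension d, and let x_0, …, x_{(d−1)/2} ∈ ℂ^{ℤ/dℤ} be defined by (x_0)_i = √((d+1)/2)·ψ₀(i)² and, for r ≠ 0, (x_r)_i = √(d+1)·ψ₀(i − 2^{−1}r)·ψ₀(i + 2^{−1}r). Then Σ_{r=0}^{(d−1)/2} |x_r⟩⟨x_r| = (1/2)(1_d + P_θ), where P_θ = (1/d)·Σ_{p ∈ (ℤ/dℤ)²} e^{2iθ_{Hp}}·D_{−p} is the generalised parity operator, and moreover P_θ² = 1_d. -/

import Mathlib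

open Matrix Complex

/-- `τ = -exp(iπ/d)`. -/
noncomputable def tau (d : ℕ) : ℂ := -Complex.exp (Real.pi * Complex.I / d)

/-- The displacement operator `D_p = D_{i,j}`, with `(r,s)` entry
`τ^{ij+2js} δ_{r,s+i}` (exponents of the `d`-th root of unity `τ` taken mod `d`). -/
noncomputable def Disp (d : ℕ) [NeZero d] (p : ZMod d × ZMod d) :
    Matrix (ZMod d) (ZMod d) ℂ :=
  Matrix.of fun r s =>
    tau d ^ ((p.1 * p.2 + 2 * p.2 * s).val) * (if r = s + p.1 then 1 else 0)

/-- The standard Hermitian inner product `⟨x, y⟩`, antilinear in the first slot. -/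
noncomputable def cInner {n : Type*} [Fintype n] (x y : n → ℂ) : ℂ :=
  ∑ k, star (x k) * y k

/-- Rank-one projector `|x⟩⟨x|` as a matrix. -/
noncomputable def outer {n : Type*} [Fintype n] (x : n → ℂ) : Matrix n n ℂ :=
  Matrix.of fun i j => x i * star (x j)

/-- `Hp = (i, 2⁻¹j)` for `p = (i,j)`. -/
def Hmap (d : ℕ) [NeZero d] (p : ZMod d × ZMod d) : ZMod d × ZMod d :=
  (p.1, (2 : ZMod d)⁻¹ * p.2)

/-- The squared SIC overlap phase `e^{2iθ_q}`:
`(d+1)·⟨ψ₀, D_q ψ₀⟩²` for `q ≠ 0`, and `1` for `q = 0`. -/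
noncomputable def sqPhase (d : ℕ) [NeZero d] (ψ₀ : ZMod d → ℂ)
    (q : ZMod d × ZMod d) : ℂ :=
  if q = 0 then 1 else ((d : ℂ) + 1) * (cInner ψ₀ ((Disp d q).mulVec ψ₀)) ^ 2

/-- The generalised parity operator `P_θ = (1/d)·Σ_p e^{2iθ_{Hp}} D_{-p}`. -/
noncomputable def genParity (d : ℕ) [NeZero d] (ψ₀ : ZMod d → ℂ) :
    Matrix (ZMod d) (ZMod d) ℂ :=
  ((d : ℂ)⁻¹) • ∑ p : ZMod d × ZMod d, sqPhase d ψ₀ (Hmap d p) • Disp d (-p)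

/-- The components of `√((d+1)/2)·ψ₀ ⊗ ψ₀` in the symmetric blocks of the
doubled Weyl representation. -/
noncomputable def sicX (d : ℕ) [NeZero d] (ψ₀ : ZMod d → ℂ) (r : ℕ) :
    ZMod d → ℂ :=
  if r = 0 then
    fun i => (Real.sqrt (((d : ℝ) + 1) / 2) : ℂ) * ψ₀ i ^ 2
  else
    fun i => (Real.sqrt ((d : ℝ) + 1) : ℂ) *
      ψ₀ (i - (2 : ZMod d)⁻¹ * (r : ZMod d)) * ψ₀ (i + (2 : ZMod d)⁻¹ * (r : ZMod d))

section SICLemmas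
variable (d : ℕ) [NeZero d]

lemma tau_prim (d : ℕ) [NeZero d] (hodd : Odd d) : IsPrimitiveRoot (tau d) d := by
  have hd0 : (d : ℕ) ≠ 0 := NeZero.ne d
  have hdC : (d : ℂ) ≠ 0 := Nat.cast_ne_zero.mpr hd0
  have h := Complex.isPrimitiveRoot_exp d hd0
  have h2 : 2 * ((d+1)/2) = d + 1 := by obtain ⟨k, hk⟩ := hodd; omega
  have hcop : Nat.Coprime ((d+1)/2) d := by
    have hdvd : Nat.gcd ((d+1)/2) d ∣ 1 := by
      have h1 : Nat.gcd ((d+1)/2) d ∣ 2 * ((d+1)/2) := Dvd.dvd.mul_left (Nat.gcd_dvd_left _ _) 2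
      have := Nat.dvd_sub h1 (Nat.gcd_dvd_right ((d+1)/2) d)
      rwa [h2, Nat.add_sub_cancel_left] at this
    exact Nat.eq_one_of_dvd_one hdvd
  have key : Complex.exp (2 * Real.pi * Complex.I / d) ^ ((d+1)/2) = tau d := by
    rw [← Complex.exp_nat_mul]
    have e1 : (((d+1)/2 : ℕ) : ℂ) * (2 * ↑Real.pi * Complex.I / ↑d)
        = ↑Real.pi * Complex.I + ↑Real.pi * Complex.I / ↑d := by
      have hc : ((((d:ℕ)+1)/2 : ℕ) : ℂ) * 2 = (d : ℂ) + 1 := by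
        have := h2
        have : (((d+1)/2 : ℕ) * 2 : ℕ) = d + 1 := by omega
        calc ((((d:ℕ)+1)/2 : ℕ) : ℂ) * 2 = ((((d+1)/2 : ℕ) * 2 : ℕ) : ℂ) := by push_cast; ring
        _ = (d : ℂ) + 1 := by rw [this]; push_cast; ring
      field_simp
      linear_combination hc
    rw [e1, Complex.exp_add, Complex.exp_pi_mul_I]
    unfold tau; ring
  rw [← key]
  exact h.pow_of_coprime ((d+1)/2) hcop

noncomputable def chi (d : ℕ) [NeZero d] (z : ZMod d) : ℂ := tau d ^ z.val


lemma tau_pow_d (hodd : Odd d) : tau d ^ d = 1 := (tau_prim d hodd).pow_eq_one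

lemma tau_pow_mod (hodd : Odd d) (a : ℕ) : tau d ^ (a % d) = tau d ^ a := by
  conv_rhs => rw [← Nat.div_add_mod a d]
  rw [pow_add, pow_mul, tau_pow_d d hodd, one_pow, one_mul]

lemma chi_natCast (hodd : Odd d) (a : ℕ) : chi d ((a : ZMod d)) = tau d ^ a := by
  rw [chi, ZMod.val_natCast, tau_pow_mod d hodd]

lemma chi_zero : chi d 0 = 1 := by
  rw [chi, ZMod.val_zero, pow_zero]

lemma chi_add (hodd : Odd d) (x y : ZMod d) : chi d (x + y) = chi d x * chi d y := by
  rw [chi, chi, chi, ZMod.val_add, tau_pow_mod d hodd, pow_add]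

lemma chi_ne_one (hodd : Odd d) {k : ZMod d} (hk : k ≠ 0) : chi d k ≠ 1 := by
  have h1 : 0 < k.val := by
    rcases Nat.eq_zero_or_pos k.val with h | h
    · exact absurd ((ZMod.val_eq_zero k).mp h) hk
    · exact h
  exact (tau_prim d hodd).pow_ne_one_of_pos_of_lt h1.ne' (ZMod.val_lt k)

lemma abs_tau : ‖tau d‖ = 1 := by
  rw [tau, norm_neg, Complex.norm_exp]
  have : (↑Real.pi * Complex.I / ↑d).re = 0 := by
    simp [Complex.div_re, Complex.mul_re]
  rw [this, Real.exp_zero]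

lemma chi_mul_chi_neg (hodd : Odd d) (x : ZMod d) : chi d x * chi d (-x) = 1 := by
  rw [← chi_add d hodd, add_neg_cancel, chi_zero]

lemma star_chi (hodd : Odd d) (x : ZMod d) : star (chi d x) = chi d (-x) := by
  have habs : ‖chi d x‖ = 1 := by
    rw [chi, norm_pow, abs_tau d, one_pow]
  have h1 : star (chi d x) * chi d x = 1 := by
    rw [RCLike.star_def, mul_comm, Complex.mul_conj, ← Complex.sq_norm, habs]
    norm_num
  have h2 := chi_mul_chi_neg d hodd x
  have hne : chi d x ≠ 0 := by
    intro h; rw [h, norm_zero] at habs; norm_num at habs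
  have : star (chi d x) * (chi d x * chi d (-x)) = star (chi d x) * 1 := by rw [h2]
  rw [mul_one, ← mul_assoc, h1, one_mul] at this
  exact this.symm

lemma chi_sum (hodd : Odd d) (k : ZMod d) :
    (∑ n : ZMod d, chi d (n * k)) = if k = 0 then (d : ℂ) else 0 := by
  split_ifs with h
  · subst h
    simp [chi_zero, Finset.card_univ, ZMod.card]
  · have key : chi d k * (∑ n : ZMod d, chi d (n * k)) = ∑ n : ZMod d, chi d (n * k) := by
      rw [Finset.mul_sum]
      have : ∀ n : ZMod d, chi d k * chi d (n * k) = chi d ((n + 1) * k) := by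
        intro n
        rw [← chi_add d hodd]
        congr 1
        ring
      simp_rw [this]
      exact Fintype.sum_equiv (Equiv.addRight 1) _ _ (fun n => rfl)
    have := chi_ne_one d hodd h
    by_contra hS
    have h2 : (chi d k - 1) * (∑ n : ZMod d, chi d (n * k)) = 0 := by
      rw [sub_mul, one_mul, key, sub_self]
    rcases mul_eq_zero.mp h2 with h3 | h3
    · exact this (sub_eq_zero.mp h3)
    · exact hS h3

lemma ovl_eq (ψ : ZMod d → ℂ) (m n : ZMod d) :
    cInner ψ ((Disp d (m, n)).mulVec ψ)
      = ∑ r : ZMod d, star (ψ r) * (chi d (m*n + 2*n*(r-m)) * ψ (r - m)) := by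
  unfold cInner
  refine Finset.sum_congr rfl fun r _ => ?_
  congr 1
  show ∑ s, (Disp d (m,n)) r s * ψ s = _
  simp only [Disp, Matrix.of_apply]
  rw [Finset.sum_eq_single (r - m)]
  · rw [sub_add_cancel, if_pos rfl, mul_one]
    rfl
  · intro s _ hs
    have : r ≠ s + m := fun h => hs (by rw [h, add_sub_cancel_right])
    rw [if_neg this, mul_zero, zero_mul]
  · intro h; exact absurd (Finset.mem_univ _) h

lemma ovl_shift (hodd : Odd d) (ψ : ZMod d → ℂ) {a : ZMod d} (h2a : (2:ZMod d) * a = 1)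
    (m n : ZMod d) :
    cInner ψ ((Disp d (m, a * n)).mulVec ψ)
      = ∑ s : ZMod d, star (ψ (s + a * m)) * ψ (s - a * m) * chi d (n * s) := by
  rw [ovl_eq]
  refine (Fintype.sum_equiv (Equiv.addRight (a*m)) _ _ fun s => ?_).symm
  show star (ψ (s + a * m)) * ψ (s - a * m) * chi d (n * s)
      = star (ψ (s + a*m)) * (chi d (m*(a*n) + 2*(a*n)*(s + a*m - m)) * ψ (s + a*m - m))
  have e2 : m*(a*n) + 2*(a*n)*(s + a*m - m) = n*s := by
    linear_combination (n*s + a*m*n) * h2a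
  have e1 : s + a*m - m = s - a*m := by linear_combination m * h2a
  rw [e2, e1]
  ring

lemma ovl_zero (ψ : ZMod d → ℂ) (hunit : cInner ψ ψ = 1) :
    cInner ψ ((Disp d 0).mulVec ψ) = 1 := by
  have h0 : ((0,0) : ZMod d × ZMod d) = 0 := rfl
  rw [← h0, ovl_eq]
  rw [← hunit]
  unfold cInner
  refine Finset.sum_congr rfl fun r _ => ?_
  have : (0:ZMod d)*0 + 2*0*(r-0) = 0 := by ring
  rw [this, chi_zero, one_mul, sub_zero]

lemma pair_ne_zero {a : ZMod d} (h2a : (2:ZMod d) * a = 1) {m n : ZMod d}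
    (h : ¬(m = 0 ∧ n = 0)) : ((m, a*n) : ZMod d × ZMod d) ≠ 0 := by
  intro hc
  apply h
  have h1 : m = 0 := congrArg Prod.fst hc
  have h2 : a*n = 0 := congrArg Prod.snd hc
  refine ⟨h1, ?_⟩
  have hn : n = 2*(a*n) := by linear_combination (-n) * h2a
  rw [hn, h2, mul_zero]

lemma ovl_mul_star (ψ : ZMod d → ℂ) {a : ZMod d} (h2a : (2:ZMod d) * a = 1)
    (hunit : cInner ψ ψ = 1)
    (hsic : ∀ p : ZMod d × ZMod d, p ≠ 0 →
      ‖cInner ψ ((Disp d p).mulVec ψ)‖ ^ 2 = 1 / (d + 1))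
    (m n : ZMod d) :
    cInner ψ ((Disp d (m, a*n)).mulVec ψ) * star (cInner ψ ((Disp d (m, a*n)).mulVec ψ))
      = if m = 0 ∧ n = 0 then 1 else 1/((d:ℂ)+1) := by
  by_cases h : m = 0 ∧ n = 0
  · obtain ⟨h1, h2⟩ := h; subst h1; subst h2
    rw [if_pos ⟨rfl, rfl⟩, mul_zero]
    have h0 : ((0,(0:ZMod d)) : ZMod d × ZMod d) = 0 := rfl
    rw [h0, ovl_zero d ψ hunit]
    simp
  · rw [if_neg h]
    have hp := pair_ne_zero d h2a h
    have hs := hsic (m, a*n) hp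
    set z := cInner ψ ((Disp d (m, a*n)).mulVec ψ) with hz
    have : z * star z = ((‖z‖ ^ 2 : ℝ) : ℂ) := by
      rw [Complex.sq_norm, RCLike.star_def, Complex.mul_conj]
    rw [this, hs]
    push_cast
    ring

lemma gram_core (hodd : Odd d) (ψ : ZMod d → ℂ) {a : ZMod d} (h2a : (2:ZMod d) * a = 1)
    (hunit : cInner ψ ψ = 1)
    (hsic : ∀ p : ZMod d × ZMod d, p ≠ 0 →
      ‖cInner ψ ((Disp d p).mulVec ψ)‖ ^ 2 = 1 / (d + 1))
    (m k : ZMod d) :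
    ∑ x : ZMod d, (star (ψ (x + a*m)) * ψ (x - a*m)) * star (star (ψ (x + k + a*m)) * ψ (x + k - a*m))
      = ((if k = 0 then 1 else 0) + (if m = 0 then 1 else 0)) / ((d:ℂ)+1) := by
  have hd0 : (d:ℂ) ≠ 0 := Nat.cast_ne_zero.mpr (NeZero.ne d)
  have hd1 : (d:ℂ)+1 ≠ 0 := Nat.cast_add_one_ne_zero d
  set g : ZMod d → ℂ := fun x => star (ψ (x + a*m)) * ψ (x - a*m) with hg
  have way2 : ∑ n : ZMod d, (cInner ψ ((Disp d (m, a*n)).mulVec ψ)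
        * star (cInner ψ ((Disp d (m, a*n)).mulVec ψ)) * chi d (n*k))
      = (d:ℂ) * ∑ x : ZMod d, g x * star (g (x+k)) := by
    have step1 : ∀ n : ZMod d, cInner ψ ((Disp d (m, a*n)).mulVec ψ)
          * star (cInner ψ ((Disp d (m, a*n)).mulVec ψ)) * chi d (n*k)
        = ∑ x : ZMod d, ∑ y : ZMod d, g x * star (g y) * chi d (n*(x-y+k)) := by
      intro n
      rw [ovl_shift d hodd ψ h2a m n, star_sum, Finset.sum_mul_sum, Finset.sum_mul]
      refine Finset.sum_congr rfl fun x _ => ?_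
      rw [Finset.sum_mul]
      refine Finset.sum_congr rfl fun y _ => ?_
      rw [star_mul', star_chi d hodd]
      have hc : chi d (n*x) * chi d (-(n*y)) * chi d (n*k) = chi d (n*(x-y+k)) := by
        rw [← chi_add d hodd, ← chi_add d hodd]
        congr 1
        ring
      have hgx : g x = star (ψ (x + a*m)) * ψ (x - a*m) := rfl
      have hgy : g y = star (ψ (y + a*m)) * ψ (y - a*m) := rfl
      rw [hgx, hgy, star_mul', star_star]
      linear_combination (star (ψ (x + a*m)) * ψ (x - a*m) * (ψ (y + a*m) * star (ψ (y - a*m)))) * hc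
    calc ∑ n : ZMod d, (cInner ψ ((Disp d (m, a*n)).mulVec ψ)
          * star (cInner ψ ((Disp d (m, a*n)).mulVec ψ)) * chi d (n*k))
        = ∑ n : ZMod d, ∑ x : ZMod d, ∑ y : ZMod d, g x * star (g y) * chi d (n*(x-y+k)) :=
          Finset.sum_congr rfl fun n _ => step1 n
      _ = ∑ x : ZMod d, ∑ y : ZMod d, ∑ n : ZMod d, g x * star (g y) * chi d (n*(x-y+k)) := by
          rw [Finset.sum_comm]
          exact Finset.sum_congr rfl fun x _ => Finset.sum_comm
      _ = ∑ x : ZMod d, ∑ y : ZMod d, g x * star (g y) * (if x-y+k = 0 then (d:ℂ) else 0) := by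
          refine Finset.sum_congr rfl fun x _ => Finset.sum_congr rfl fun y _ => ?_
          rw [← Finset.mul_sum, chi_sum d hodd]
      _ = ∑ x : ZMod d, g x * star (g (x+k)) * (d:ℂ) := by
          refine Finset.sum_congr rfl fun x _ => ?_
          rw [Finset.sum_eq_single (x+k)]
          · rw [if_pos (by ring)]
          · intro y _ hy
            rw [if_neg (fun hc => hy (by linear_combination -hc)), mul_zero]
          · intro h; exact absurd (Finset.mem_univ _) h
      _ = (d:ℂ) * ∑ x : ZMod d, g x * star (g (x+k)) := by
          rw [Finset.mul_sum]
          exact Finset.sum_congr rfl fun x _ => by ring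
  have way1 : ∑ n : ZMod d, (cInner ψ ((Disp d (m, a*n)).mulVec ψ)
        * star (cInner ψ ((Disp d (m, a*n)).mulVec ψ)) * chi d (n*k))
      = (d:ℂ) * (((if k = 0 then 1 else 0) + (if m = 0 then 1 else 0)) / ((d:ℂ)+1)) := by
    have hterm : ∀ n : ZMod d, cInner ψ ((Disp d (m, a*n)).mulVec ψ)
          * star (cInner ψ ((Disp d (m, a*n)).mulVec ψ)) * chi d (n*k)
        = (1/((d:ℂ)+1)) * chi d (n*k)
          + (if n = 0 then (if m = 0 then (d:ℂ)/((d:ℂ)+1) else 0) else 0) := by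
      intro n
      rw [ovl_mul_star d ψ h2a hunit hsic]
      by_cases hn : n = 0
      · subst hn
        by_cases hm : m = 0
        · subst hm
          rw [if_pos ⟨rfl, rfl⟩, if_pos rfl, if_pos rfl]
          have : (0:ZMod d)*k = 0 := by ring
          rw [this, chi_zero]
          field_simp
          ring
        · rw [if_neg (fun hc => hm hc.1), if_pos rfl, if_neg hm]
          ring
      · rw [if_neg (fun hc => hn hc.2), if_neg hn]
        ring
    rw [Finset.sum_congr rfl fun n _ => hterm n, Finset.sum_add_distrib, ← Finset.mul_sum,
      chi_sum d hodd, Finset.sum_ite_eq' Finset.univ (0 : ZMod d)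
        (fun _ => if m = 0 then (d:ℂ)/((d:ℂ)+1) else 0), if_pos (Finset.mem_univ _)]
    by_cases hk : k = 0 <;> by_cases hm : m = 0 <;>
      simp only [hk, hm, if_pos, if_neg, if_true, if_false] <;> field_simp <;> ring
  have key := way1.symm.trans way2
  have hfold : ∀ x : ZMod d, (star (ψ (x + a*m)) * ψ (x - a*m))
      * star (star (ψ (x + k + a*m)) * ψ (x + k - a*m)) = g x * star (g (x+k)) :=
    fun x => rfl
  simp only [hfold]
  rw [eq_div_iff hd1]
  apply mul_left_cancel₀ hd0
  field_simp at key
  simp only [RCLike.star_def] at key ⊢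
  linear_combination (-(d:ℂ)) * key

lemma gram (hodd : Odd d) (ψ : ZMod d → ℂ) {a : ZMod d} (h2a : (2:ZMod d) * a = 1)
    (hunit : cInner ψ ψ = 1)
    (hsic : ∀ p : ZMod d × ZMod d, p ≠ 0 →
      ‖cInner ψ ((Disp d p).mulVec ψ)‖ ^ 2 = 1 / (d + 1))
    (s t : ZMod d) :
    ∑ u : ZMod d, star (ψ (u-s) * ψ (u+s)) * (ψ (u-t) * ψ (u+t))
      = ((if s = t then 1 else 0) + (if s = -t then 1 else 0)) / ((d:ℂ)+1) := by
  have core := gram_core d hodd ψ h2a hunit hsic (s+t) (t-s)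
  have hre : ∑ x : ZMod d, (star (ψ (x + a*(s+t))) * ψ (x - a*(s+t)))
        * star (star (ψ (x + (t-s) + a*(s+t))) * ψ (x + (t-s) - a*(s+t)))
      = ∑ u : ZMod d, star (ψ (u-s) * ψ (u+s)) * (ψ (u-t) * ψ (u+t)) := by
    refine Fintype.sum_equiv (Equiv.addRight (a*(t-s))) _ _ fun x => ?_
    simp only [Equiv.coe_addRight]
    have e1 : x + a*(s+t) = (x + a*(t-s)) + s := by linear_combination s * h2a
    have e2 : x - a*(s+t) = (x + a*(t-s)) - t := by linear_combination (-t) * h2a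
    have e3 : x + (t-s) + a*(s+t) = (x + a*(t-s)) + t := by linear_combination s * h2a
    have e4 : x + (t-s) - a*(s+t) = (x + a*(t-s)) - s := by linear_combination (-t) * h2a
    rw [e1, e2, e3, e4, star_mul', star_mul', star_star]
    ring
  rw [hre] at core
  rw [core]
  have h1 : (t - s = 0) ↔ (s = t) :=
    ⟨fun h => by linear_combination -h, fun h => by rw [h]; ring⟩
  have h2 : (s + t = 0) ↔ (s = -t) :=
    ⟨fun h => by linear_combination h, fun h => by rw [h]; ring⟩
  simp only [h1, h2]


lemma genParity_apply (hodd : Odd d) (ψ : ZMod d → ℂ)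
    (hunit : cInner ψ ψ = 1) (i j : ZMod d) :
    genParity d ψ i j
      = ((d:ℂ)+1) * (∑ u : ZMod d, (ψ (i-u) * ψ (i+u)) * star (ψ (j-u) * ψ (j+u)))
        - (if i = j then 1 else 0) := by
  have hd0 : (d:ℂ) ≠ 0 := Nat.cast_ne_zero.mpr (NeZero.ne d)
  have h2u : IsUnit (2 : ZMod d) := by
    have : ((2:ℕ) : ZMod d) = (2 : ZMod d) := by push_cast; rfl
    rw [← this]
    exact (ZMod.isUnit_iff_coprime 2 d).mpr (Nat.coprime_two_left.mpr hodd)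
  set a := (2:ZMod d)⁻¹ with ha
  have h2a : (2:ZMod d) * a = 1 := ZMod.mul_inv_of_unit 2 h2u
  have hchi : ∀ z : ZMod d, tau d ^ z.val = chi d z := fun _ => rfl
  -- Step 1: collapse the first coordinate
  have e0 : genParity d ψ i j
      = (d:ℂ)⁻¹ * ∑ n : ZMod d,
          sqPhase d ψ (j - i, a * n) * chi d ((j-i)*n - 2*n*j) := by
    unfold genParity Hmap
    simp only [Matrix.smul_apply, Matrix.sum_apply, Matrix.smul_apply, smul_eq_mul]
    congr 1
    rw [Fintype.sum_prod_type, Finset.sum_comm]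
    refine Finset.sum_congr rfl fun n _ => ?_
    rw [Finset.sum_eq_single (j - i)]
    · congr 1
      show Disp d (-(j - i, n)) i j = chi d ((j-i)*n - 2*n*j)
      simp only [Disp, Matrix.of_apply, Prod.fst_neg, Prod.snd_neg]
      have hif : i = j + -(j - i) := by ring
      rw [if_pos hif, mul_one, hchi]
      congr 1
      ring
    · intro m _ hm
      simp only [Disp, Matrix.of_apply, Prod.fst_neg, Prod.snd_neg]
      rw [if_neg (fun h => hm (by linear_combination h)), mul_zero, mul_zero]
    · intro h; exact absurd (Finset.mem_univ _) h
  set m := j - i with hm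
  -- Step 2: split off the q = 0 correction
  have e1 : ∀ n : ZMod d, sqPhase d ψ (m, a*n)
      = ((d:ℂ)+1) * (cInner ψ ((Disp d (m, a*n)).mulVec ψ))^2
        + (if m = 0 ∧ n = 0 then -(d:ℂ) else 0) := by
    intro n
    unfold sqPhase
    by_cases hc : m = 0 ∧ n = 0
    · have hz : ((m, a*n) : ZMod d × ZMod d) = 0 := by
        rw [hc.1, hc.2, mul_zero]; rfl
      rw [hz, if_pos rfl, if_pos hc, ovl_zero d ψ hunit]
      ring
    · rw [if_neg (pair_ne_zero d h2a hc), if_neg hc]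
      ring
  have e2 : ∑ n : ZMod d, sqPhase d ψ (m, a*n) * chi d (m*n - 2*n*j)
      = (∑ n : ZMod d, ((d:ℂ)+1) * (cInner ψ ((Disp d (m, a*n)).mulVec ψ))^2 * chi d (m*n - 2*n*j))
        + (∑ n : ZMod d, (if m = 0 ∧ n = 0 then -(d:ℂ) else 0) * chi d (m*n - 2*n*j)) := by
    rw [← Finset.sum_add_distrib]
    refine Finset.sum_congr rfl fun n _ => ?_
    rw [e1 n, add_mul]
  -- Step 3: the correction sum
  have e3 : ∑ n : ZMod d, (if m = 0 ∧ n = 0 then -(d:ℂ) else 0) * chi d (m*n - 2*n*j)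
      = if i = j then -(d:ℂ) else 0 := by
    have hterm : ∀ n : ZMod d, (if m = 0 ∧ n = 0 then -(d:ℂ) else 0) * chi d (m*n - 2*n*j)
        = if n = 0 then (if i = j then -(d:ℂ) else 0) else 0 := by
      intro n
      by_cases hn : n = 0
      · subst hn
        by_cases hij : i = j
        · have hji : m = 0 := by rw [hm, hij]; ring
          have harg : m*0 - 2*0*j = 0 := by ring
          rw [if_pos ⟨hji, rfl⟩, harg, chi_zero, if_pos rfl, if_pos hij, mul_one]
        · have hnc : ¬(m = 0 ∧ (0:ZMod d) = 0) := fun hc => hij (by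
            have := hc.1
            rw [hm] at this
            linear_combination -this)
          rw [if_neg hnc, if_pos rfl, if_neg hij, zero_mul]
      · rw [if_neg (fun hc => hn hc.2), if_neg hn, zero_mul]
    rw [Finset.sum_congr rfl fun n _ => hterm n,
      Finset.sum_ite_eq' Finset.univ (0 : ZMod d) (fun _ => if i = j then -(d:ℂ) else 0),
      if_pos (Finset.mem_univ _)]
  -- Step 4: the main sum
  set g : ZMod d → ℂ := fun x => star (ψ (x + a*m)) * ψ (x - a*m) with hg
  have e4 : ∑ n : ZMod d, ((d:ℂ)+1) * (cInner ψ ((Disp d (m, a*n)).mulVec ψ))^2 * chi d (m*n - 2*n*j)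
      = (d:ℂ) * (((d:ℂ)+1) * ∑ s : ZMod d, g s * g (i + j - s)) := by
    have hterm : ∀ n : ZMod d, ((d:ℂ)+1) * (cInner ψ ((Disp d (m, a*n)).mulVec ψ))^2 * chi d (m*n - 2*n*j)
        = ∑ s : ZMod d, ∑ t : ZMod d, ((d:ℂ)+1) * (g s * g t) * chi d (n*(s + t - i - j)) := by
      intro n
      rw [ovl_shift d hodd ψ h2a m n, pow_two, Finset.sum_mul_sum]
      rw [Finset.mul_sum, Finset.sum_mul]
      refine Finset.sum_congr rfl fun s _ => ?_
      rw [Finset.mul_sum, Finset.sum_mul]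
      refine Finset.sum_congr rfl fun t _ => ?_
      have hcc : chi d (n*s) * chi d (n*t) * chi d (m*n - 2*n*j) = chi d (n*(s + t - i - j)) := by
        rw [← chi_add d hodd, ← chi_add d hodd]
        congr 1
        rw [hm]
        ring
      have hgs : g s = star (ψ (s + a*m)) * ψ (s - a*m) := rfl
      have hgt : g t = star (ψ (t + a*m)) * ψ (t - a*m) := rfl
      rw [hgs, hgt]
      linear_combination (((d:ℂ)+1) * (star (ψ (s + a*m)) * ψ (s - a*m))
        * (star (ψ (t + a*m)) * ψ (t - a*m))) * hcc
    calc ∑ n : ZMod d, ((d:ℂ)+1) * (cInner ψ ((Disp d (m, a*n)).mulVec ψ))^2 * chi d (m*n - 2*n*j)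
        = ∑ n : ZMod d, ∑ s : ZMod d, ∑ t : ZMod d,
            ((d:ℂ)+1) * (g s * g t) * chi d (n*(s + t - i - j)) :=
          Finset.sum_congr rfl fun n _ => hterm n
      _ = ∑ s : ZMod d, ∑ t : ZMod d, ∑ n : ZMod d,
            ((d:ℂ)+1) * (g s * g t) * chi d (n*(s + t - i - j)) := by
          rw [Finset.sum_comm]
          exact Finset.sum_congr rfl fun s _ => Finset.sum_comm
      _ = ∑ s : ZMod d, ∑ t : ZMod d,
            ((d:ℂ)+1) * (g s * g t) * (if s + t - i - j = 0 then (d:ℂ) else 0) := by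
          refine Finset.sum_congr rfl fun s _ => Finset.sum_congr rfl fun t _ => ?_
          rw [← Finset.mul_sum, chi_sum d hodd]
      _ = ∑ s : ZMod d, ((d:ℂ)+1) * (g s * g (i + j - s)) * (d:ℂ) := by
          refine Finset.sum_congr rfl fun s _ => ?_
          rw [Finset.sum_eq_single (i + j - s)]
          · rw [if_pos (by ring)]
          · intro t _ ht
            rw [if_neg (fun hc => ht (by linear_combination hc)), mul_zero]
          · intro h; exact absurd (Finset.mem_univ _) h
      _ = (d:ℂ) * (((d:ℂ)+1) * ∑ s : ZMod d, g s * g (i + j - s)) := by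
          rw [Finset.mul_sum, Finset.mul_sum]
          exact Finset.sum_congr rfl fun s _ => by ring
  -- Step 5: reindex the main sum
  have e5 : ∑ s : ZMod d, g s * g (i + j - s)
      = ∑ u : ZMod d, (ψ (i-u) * ψ (i+u)) * star (ψ (j-u) * ψ (j+u)) := by
    refine Fintype.sum_equiv (Equiv.addRight (-(a*(i+j)))) _ _ fun x => ?_
    simp only [Equiv.coe_addRight]
    have hgs : g x = star (ψ (x + a*m)) * ψ (x - a*m) := rfl
    have hgt : g (i + j - x)
        = star (ψ (i + j - x + a*m)) * ψ (i + j - x - a*m) := rfl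
    have a1 : x + a*m = j + (x + -(a*(i+j))) := by rw [hm]; linear_combination j * h2a
    have a2 : x - a*m = i + (x + -(a*(i+j))) := by rw [hm]; linear_combination i * h2a
    have a3 : i + j - x + a*m = j - (x + -(a*(i+j))) := by rw [hm]; linear_combination (-i) * h2a
    have a4 : i + j - x - a*m = i - (x + -(a*(i+j))) := by rw [hm]; linear_combination (-j) * h2a
    rw [hgs, hgt, a1, a2, a3, a4, star_mul']
    ring
  -- assemble
  rw [e0, e2, e3, e4, e5]
  by_cases hij : i = j
  · rw [if_pos hij, if_pos hij]
    field_simp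
    ring
  · rw [if_neg hij, if_neg hij]
    field_simp
    ring

lemma parity_sq (hodd : Odd d) (ψ : ZMod d → ℂ)
    (hunit : cInner ψ ψ = 1)
    (hsic : ∀ p : ZMod d × ZMod d, p ≠ 0 →
      ‖cInner ψ ((Disp d p).mulVec ψ)‖ ^ 2 = 1 / (d + 1)) :
    genParity d ψ * genParity d ψ = 1 := by
  have hd1 : (d:ℂ)+1 ≠ 0 := Nat.cast_add_one_ne_zero d
  have h2u : IsUnit (2 : ZMod d) := by
    have : ((2:ℕ) : ZMod d) = (2 : ZMod d) := by push_cast; rfl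
    rw [← this]
    exact (ZMod.isUnit_iff_coprime 2 d).mpr (Nat.coprime_two_left.mpr hodd)
  have h2a : (2:ZMod d) * (2:ZMod d)⁻¹ = 1 := ZMod.mul_inv_of_unit 2 h2u
  set c : ℂ := (d:ℂ)+1 with hc
  set Qm : Matrix (ZMod d) (ZMod d) ℂ :=
    Matrix.of (fun i j => ∑ u : ZMod d, (ψ (i-u) * ψ (i+u)) * star (ψ (j-u) * ψ (j+u))) with hQm
  have hP : genParity d ψ = c • Qm - 1 := by
    ext i j
    rw [Matrix.sub_apply, Matrix.smul_apply, Matrix.one_apply, smul_eq_mul]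
    exact genParity_apply d hodd ψ hunit i j
  have hQQ : Qm * Qm = (2/c) • Qm := by
    ext i j
    rw [Matrix.mul_apply, Matrix.smul_apply, smul_eq_mul]
    have step1 : ∀ k : ZMod d, Qm i k * Qm k j
        = ∑ s : ZMod d, ∑ t : ZMod d,
            ((ψ (i-s) * ψ (i+s)) * star (ψ (k-s) * ψ (k+s)))
              * ((ψ (k-t) * ψ (k+t)) * star (ψ (j-t) * ψ (j+t))) := by
      intro k
      show (∑ s : ZMod d, (ψ (i-s) * ψ (i+s)) * star (ψ (k-s) * ψ (k+s)))
          * (∑ t : ZMod d, (ψ (k-t) * ψ (k+t)) * star (ψ (j-t) * ψ (j+t))) = _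
      rw [Finset.sum_mul_sum]
    calc ∑ k : ZMod d, Qm i k * Qm k j
        = ∑ k : ZMod d, ∑ s : ZMod d, ∑ t : ZMod d,
            ((ψ (i-s) * ψ (i+s)) * star (ψ (k-s) * ψ (k+s)))
              * ((ψ (k-t) * ψ (k+t)) * star (ψ (j-t) * ψ (j+t))) :=
          Finset.sum_congr rfl fun k _ => step1 k
      _ = ∑ s : ZMod d, ∑ t : ZMod d, ∑ k : ZMod d,
            ((ψ (i-s) * ψ (i+s)) * star (ψ (k-s) * ψ (k+s)))
              * ((ψ (k-t) * ψ (k+t)) * star (ψ (j-t) * ψ (j+t))) := by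
          rw [Finset.sum_comm]
          exact Finset.sum_congr rfl fun s _ => Finset.sum_comm
      _ = ∑ s : ZMod d, ∑ t : ZMod d,
            ((ψ (i-s) * ψ (i+s)) * star (ψ (j-t) * ψ (j+t)))
              * (((if s = t then 1 else 0) + (if s = -t then 1 else 0)) / c) := by
          refine Finset.sum_congr rfl fun s _ => Finset.sum_congr rfl fun t _ => ?_
          rw [← gram d hodd ψ h2a hunit hsic s t, Finset.mul_sum]
          refine Finset.sum_congr rfl fun k _ => ?_
          simp only [star_mul']
          ring
      _ = ∑ s : ZMod d,
            (((ψ (i-s) * ψ (i+s)) * star (ψ (j-s) * ψ (j+s))) * (1/c)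
              + ((ψ (i-s) * ψ (i+s)) * star (ψ (j-(-s)) * ψ (j+(-s)))) * (1/c)) := by
          refine Finset.sum_congr rfl fun s _ => ?_
          have hsplit : ∀ t : ZMod d,
              ((ψ (i-s) * ψ (i+s)) * star (ψ (j-t) * ψ (j+t)))
                * (((if s = t then 1 else 0) + (if s = -t then 1 else 0)) / c)
              = (if s = t then ((ψ (i-s) * ψ (i+s)) * star (ψ (j-t) * ψ (j+t))) * (1/c) else 0)
                + (if s = -t then ((ψ (i-s) * ψ (i+s)) * star (ψ (j-t) * ψ (j+t))) * (1/c) else 0) := by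
            intro t
            split_ifs <;> ring
          rw [Finset.sum_congr rfl fun t _ => hsplit t, Finset.sum_add_distrib]
          congr 1
          · rw [Finset.sum_eq_single s]
            · rw [if_pos rfl]
            · intro t _ ht
              rw [if_neg (fun hh => ht hh.symm)]
            · intro h; exact absurd (Finset.mem_univ _) h
          · rw [Finset.sum_eq_single (-s)]
            · rw [if_pos (neg_neg s).symm]
            · intro t _ ht
              rw [if_neg (fun hh => ht (by rw [hh, neg_neg]))]
            · intro h; exact absurd (Finset.mem_univ _) h
      _ = ∑ s : ZMod d, (2/c) * ((ψ (i-s) * ψ (i+s)) * star (ψ (j-s) * ψ (j+s))) := by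
          refine Finset.sum_congr rfl fun s _ => ?_
          rw [sub_neg_eq_add, ← sub_eq_add_neg]
          have : ψ (j+s) * ψ (j-s) = ψ (j-s) * ψ (j+s) := mul_comm _ _
          rw [show star (ψ (j+s) * ψ (j-s)) = star (ψ (j-s) * ψ (j+s)) from congrArg star this]
          ring
      _ = (2/c) * Qm i j := by
          rw [← Finset.mul_sum]
          rfl
  have hcc : c * c * (2/c) = 2 * c := by field_simp
  rw [hP, sub_mul, mul_sub, mul_sub, mul_one, one_mul, smul_mul_assoc, mul_smul_comm,
    smul_smul, hQQ, smul_smul, hcc]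
  rw [show (2:ℂ) * c = c + c from two_mul c, add_smul]
  simp only [mul_one]
  abel

lemma zmod_sum_eq_range (F : ZMod d → ℂ) :
    ∑ s : ZMod d, F s = ∑ r ∈ Finset.range d, F (r : ℕ) := by
  refine (Finset.sum_nbij' (fun (r : ℕ) => ((r : ZMod d))) (fun s : ZMod d => s.val)
    ?_ ?_ ?_ ?_ ?_).symm
  · intro r _; exact Finset.mem_univ _
  · intro s _; exact Finset.mem_range.mpr (ZMod.val_lt s)
  · intro r hr; exact ZMod.val_cast_of_lt (Finset.mem_range.mp hr)
  · intro s _; exact ZMod.natCast_rightInverse s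
  · intro r _; rfl

lemma fold_sum (hd : 3 ≤ d) (hodd : Odd d) (F : ZMod d → ℂ) (hF : ∀ s, F (-s) = F s) :
    ∑ s : ZMod d, F s
      = F 0 + 2 * ∑ r ∈ Finset.Ico 1 ((d-1)/2 + 1), F ((r : ℕ) : ZMod d) := by
  obtain ⟨k, hk⟩ := hodd
  have hdk : (d-1)/2 = k := by omega
  rw [hdk, zmod_sum_eq_range]
  rw [Finset.range_eq_Ico, ← Finset.sum_Ico_consecutive _ (by omega : 0 ≤ k+1) (by omega : k+1 ≤ d)]
  have part1 : ∑ r ∈ Finset.Ico 0 (k+1), F ((r:ℕ) : ZMod d)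
      = F 0 + ∑ r ∈ Finset.Ico 1 (k+1), F ((r:ℕ) : ZMod d) := by
    rw [← Finset.sum_Ico_consecutive _ (by omega : 0 ≤ 1) (by omega : 1 ≤ k+1)]
    congr 1
    rw [← Finset.range_eq_Ico, Finset.sum_range_one, Nat.cast_zero]
  have part2 : ∑ r ∈ Finset.Ico (k+1) d, F ((r:ℕ) : ZMod d)
      = ∑ r ∈ Finset.Ico 1 (k+1), F ((r:ℕ) : ZMod d) := by
    refine Finset.sum_nbij' (fun r => d - r) (fun r => d - r) ?_ ?_ ?_ ?_ ?_
    · intro r hr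
      rw [Finset.mem_Ico] at hr ⊢
      omega
    · intro r hr
      rw [Finset.mem_Ico] at hr ⊢
      omega
    · intro r hr; rw [Finset.mem_Ico] at hr; omega
    · intro r hr; rw [Finset.mem_Ico] at hr; omega
    · intro r hr
      rw [Finset.mem_Ico] at hr
      have hrd : r ≤ d := by omega
      have hcast : ((d - r : ℕ) : ZMod d) = -((r:ℕ) : ZMod d) := by
        rw [Nat.cast_sub hrd, ZMod.natCast_self, zero_sub]
      show F ((r:ℕ) : ZMod d) = F ((d - r : ℕ) : ZMod d)
      rw [hcast, hF]
  rw [part1, part2]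
  ring


lemma claim1 (hodd : Odd d) (hd : 3 ≤ d) (ψ : ZMod d → ℂ) (hunit : cInner ψ ψ = 1) :
    ∑ r ∈ Finset.range ((d - 1) / 2 + 1), outer (sicX d ψ r)
      = (1 / 2 : ℂ) • ((1 : Matrix (ZMod d) (ZMod d) ℂ) + genParity d ψ) := by
  have h2u : IsUnit (2 : ZMod d) := by
    have : ((2:ℕ) : ZMod d) = (2 : ZMod d) := by push_cast; rfl
    rw [← this]
    exact (ZMod.isUnit_iff_coprime 2 d).mpr (Nat.coprime_two_left.mpr hodd)
  have h2a : (2:ZMod d) * (2:ZMod d)⁻¹ = 1 := ZMod.mul_inv_of_unit 2 h2u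
  have hstar : ∀ x : ℝ, star ((x : ℝ) : ℂ) = ((x : ℝ) : ℂ) := fun x => by
    rw [RCLike.star_def, Complex.conj_ofReal]
  ext i j
  rw [Matrix.smul_apply, Matrix.add_apply, Matrix.one_apply, smul_eq_mul,
    genParity_apply d hodd ψ hunit i j, Matrix.sum_apply]
  set F : ZMod d → ℂ := fun s =>
    (ψ (i - (2:ZMod d)⁻¹*s) * ψ (i + (2:ZMod d)⁻¹*s))
      * star (ψ (j - (2:ZMod d)⁻¹*s) * ψ (j + (2:ZMod d)⁻¹*s)) with hFdef
  have hF : ∀ s, F (-s) = F s := by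
    intro s
    show (ψ (i - (2:ZMod d)⁻¹*(-s)) * ψ (i + (2:ZMod d)⁻¹*(-s)))
      * star (ψ (j - (2:ZMod d)⁻¹*(-s)) * ψ (j + (2:ZMod d)⁻¹*(-s)))
      = (ψ (i - (2:ZMod d)⁻¹*s) * ψ (i + (2:ZMod d)⁻¹*s))
      * star (ψ (j - (2:ZMod d)⁻¹*s) * ψ (j + (2:ZMod d)⁻¹*s))
    have e1 : i - (2:ZMod d)⁻¹*(-s) = i + (2:ZMod d)⁻¹*s := by ring
    have e2 : i + (2:ZMod d)⁻¹*(-s) = i - (2:ZMod d)⁻¹*s := by ring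
    have e3 : j - (2:ZMod d)⁻¹*(-s) = j + (2:ZMod d)⁻¹*s := by ring
    have e4 : j + (2:ZMod d)⁻¹*(-s) = j - (2:ZMod d)⁻¹*s := by ring
    rw [e1, e2, e3, e4]
    simp only [star_mul']
    ring
  have hO0 : outer (sicX d ψ 0) i j = (((d:ℂ)+1)/2) * F 0 := by
    have hs : sicX d ψ 0 = fun i => (Real.sqrt (((d : ℝ) + 1) / 2) : ℂ) * ψ i ^ 2 := by
      rw [sicX, if_pos rfl]
    show sicX d ψ 0 i * star (sicX d ψ 0 j) = _
    rw [hs]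
    have hF0 : F 0 = (ψ i * ψ i) * star (ψ j * ψ j) := by
      show (ψ (i - (2:ZMod d)⁻¹*0) * ψ (i + (2:ZMod d)⁻¹*0))
        * star (ψ (j - (2:ZMod d)⁻¹*0) * ψ (j + (2:ZMod d)⁻¹*0)) = _
      simp only [mul_zero, sub_zero, add_zero]
    rw [hF0]
    have hcc : ((Real.sqrt (((d:ℝ)+1)/2) : ℝ):ℂ) * ((Real.sqrt (((d:ℝ)+1)/2) : ℝ):ℂ)
        = ((d:ℂ)+1)/2 := by
      rw [← Complex.ofReal_mul, Real.mul_self_sqrt (by positivity)]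
      push_cast
      ring
    simp only [star_mul', star_pow, hstar]
    linear_combination (ψ i^2 * (star (ψ j))^2) * hcc
  have hOr : ∀ r : ℕ, r ≠ 0 → outer (sicX d ψ r) i j = ((d:ℂ)+1) * F ((r : ℕ) : ZMod d) := by
    intro r hr
    have hs : sicX d ψ r = fun i => (Real.sqrt ((d : ℝ) + 1) : ℂ) *
        ψ (i - (2 : ZMod d)⁻¹ * (r : ZMod d)) * ψ (i + (2 : ZMod d)⁻¹ * (r : ZMod d)) := by
      rw [sicX, if_neg hr]
    show sicX d ψ r i * star (sicX d ψ r j) = _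
    rw [hs]
    have hcc : ((Real.sqrt ((d:ℝ)+1) : ℝ):ℂ) * ((Real.sqrt ((d:ℝ)+1) : ℝ):ℂ) = ((d:ℂ)+1) := by
      rw [← Complex.ofReal_mul, Real.mul_self_sqrt (by positivity)]
      push_cast
      ring
    show (Real.sqrt ((d : ℝ) + 1) : ℂ) * ψ (i - (2 : ZMod d)⁻¹ * (r : ZMod d))
        * ψ (i + (2 : ZMod d)⁻¹ * (r : ZMod d))
        * star ((Real.sqrt ((d : ℝ) + 1) : ℂ) * ψ (j - (2 : ZMod d)⁻¹ * (r : ZMod d))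
          * ψ (j + (2 : ZMod d)⁻¹ * (r : ZMod d)))
      = ((d:ℂ)+1) * ((ψ (i - (2:ZMod d)⁻¹*(r : ZMod d)) * ψ (i + (2:ZMod d)⁻¹*(r : ZMod d)))
        * star (ψ (j - (2:ZMod d)⁻¹*(r : ZMod d)) * ψ (j + (2:ZMod d)⁻¹*(r : ZMod d))))
    simp only [star_mul', hstar]
    linear_combination (ψ (i - (2:ZMod d)⁻¹*(r : ZMod d)) * ψ (i + (2:ZMod d)⁻¹*(r : ZMod d))
      * star (ψ (j - (2:ZMod d)⁻¹*(r : ZMod d))) * star (ψ (j + (2:ZMod d)⁻¹*(r : ZMod d)))) * hcc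
  have hre : ∑ s : ZMod d, F s
      = ∑ u : ZMod d, (ψ (i-u) * ψ (i+u)) * star (ψ (j-u) * ψ (j+u)) := by
    refine Fintype.sum_equiv
      ⟨fun s => (2:ZMod d)⁻¹ * s, fun s => 2 * s,
        fun s => by dsimp only; linear_combination s * h2a,
        fun s => by dsimp only; linear_combination s * h2a⟩ _ _ fun s => rfl
  have hsplit : ∑ r ∈ Finset.range ((d - 1) / 2 + 1), outer (sicX d ψ r) i j
      = (((d:ℂ)+1)/2) * F 0 + ((d:ℂ)+1) * ∑ r ∈ Finset.Ico 1 ((d-1)/2 + 1), F ((r : ℕ) : ZMod d) := by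
    rw [Finset.range_eq_Ico,
      ← Finset.sum_Ico_consecutive _ (by omega : 0 ≤ 1) (by omega : 1 ≤ (d-1)/2+1)]
    congr 1
    · rw [← Finset.range_eq_Ico, Finset.sum_range_one, hO0]
    · rw [Finset.mul_sum]
      refine Finset.sum_congr rfl fun r hr => ?_
      rw [Finset.mem_Ico] at hr
      exact hOr r (by omega)
  have hfold := fold_sum d hd hodd F hF
  rw [hre] at hfold
  rw [hsplit]
  linear_combination (-(((d:ℂ)+1)/2)) * hfold

end SICLemmas

/-- For a SIC fiducial `ψ₀` in odd dimension `d`, the sum of the rank-one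
projectors onto the vectors `x_r` equals `(1/2)(1 + P_θ)`, and `P_θ² = 1`. -/
theorem sum_sicX_projectors_eq_genParity
    (d : ℕ) [NeZero d] (hodd : Odd d) (hd : 3 ≤ d)
    (ψ₀ : ZMod d → ℂ)
    (hunit : cInner ψ₀ ψ₀ = 1)
    (hsic : ∀ p : ZMod d × ZMod d, p ≠ 0 →
      ‖cInner ψ₀ ((Disp d p).mulVec ψ₀)‖ ^ 2 = 1 / (d + 1)) :
    (∑ r ∈ Finset.range ((d - 1) / 2 + 1), outer (sicX d ψ₀ r)
      = (1 / 2 : ℂ) • ((1 : Matrix (ZMod d) (ZMod d) ℂ) + genParity d ψ₀)) ∧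
    genParity d ψ₀ * genParity d ψ₀ = 1 := by
  constructor
  · exact claim1 d hodd hd ψ₀ hunit
  · exact parity_sq d hodd ψ₀ hunit hsic
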